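/- Let f : ℝⁿ → (-∞,+∞] be a function bounded from below with lim_{|ξ|→∞} f(ξ)/|ξ| = +∞. If f is lower semicontinuous, then its level convex envelope f^lc is lower semicontinuous. -/

import Mathlib

open Set

/-- A function on `ℝⁿ` with values in a linear order is *level convex* if
`f (t ξ + (1-t) η) ≤ max (f ξ) (f η)` for all `ξ, η` and `t ∈ [0,1]`. -/
def LevelConvex {n : ℕ} {β : Type*} [LinearOrder β]
    (f : EuclideanSpace ℝ (Fin n) → β) : Prop :=
  ∀ ξ η : EuclideanSpace ℝ (Fin n), ∀ t ∈ Set.Icc (0 : ℝ) 1,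
    f (t • ξ + (1 - t) • η) ≤ max (f ξ) (f η)

/-- The level convex envelope of `f : ℝⁿ → [-∞,+∞]`. -/
noncomputable def lcEnv {n : ℕ} (f : EuclideanSpace ℝ (Fin n) → EReal) :
    EuclideanSpace ℝ (Fin n) → EReal :=
  fun ξ => ⨆ (g : EuclideanSpace ℝ (Fin n) → EReal)
    (_ : LevelConvex g ∧ g ≤ f), g ξ

/-- In a finite-dimensional Euclidean space, the convex hull of a compact set is compact. -/
lemma isCompact_convexHull_of_isCompact {n : ℕ} {s : Set (EuclideanSpace ℝ (Fin n))}
    (hs : IsCompact s) : IsCompact (convexHull ℝ s) := by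
  classical
  rcases s.eq_empty_or_nonempty with rfl | ⟨x₀, hx₀⟩
  · simpa using isCompact_empty
  set m := n + 1 with hm
  set Φ : (Fin m → ℝ) × (Fin m → EuclideanSpace ℝ (Fin n)) → EuclideanSpace ℝ (Fin n) :=
    fun p => ∑ j : Fin m, p.1 j • p.2 j with hΦ
  have hcont : Continuous Φ := by
    apply continuous_finset_sum
    intro j _
    exact ((continuous_apply j).comp continuous_fst).smul
      ((continuous_apply j).comp continuous_snd)
  have hcomp : IsCompact ((stdSimplex ℝ (Fin m)) ×ˢ (Set.univ.pi fun _ : Fin m => s)) :=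
    (isCompact_stdSimplex ℝ _).prod (isCompact_univ_pi fun _ => hs)
  have himg : convexHull ℝ s
      = Φ '' ((stdSimplex ℝ (Fin m)) ×ˢ (Set.univ.pi fun _ : Fin m => s)) := by
    apply Subset.antisymm
    · intro x hx
      obtain ⟨ι, hι, z, w, hzs, hai, hw, hw1, hwz⟩ := eq_pos_convex_span_of_mem_convexHull hx
      have hcard : Fintype.card ι ≤ m := by
        have h1 := hai.card_le_finrank_succ
        have h2 : Module.finrank ℝ (vectorSpan ℝ (Set.range z)) ≤ n := by
          have := Submodule.finrank_le (vectorSpan ℝ (Set.range z))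
          simpa [finrank_euclideanSpace_fin] using this
        omega
      obtain ⟨e⟩ : Nonempty (ι ↪ Fin m) :=
        Function.Embedding.nonempty_of_card_le (by simpa using hcard)
      set w' : Fin m → ℝ := fun j => if h : ∃ i, e i = j then w h.choose else 0 with hw'
      set z' : Fin m → EuclideanSpace ℝ (Fin n) :=
        fun j => if h : ∃ i, e i = j then z h.choose else x₀ with hz'
      have hkey : ∀ i : ι, w' (e i) = w i ∧ z' (e i) = z i := by
        intro i
        have h : ∃ i', e i' = e i := ⟨i, rfl⟩
        have hch : h.choose = i := e.injective h.choose_spec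
        constructor
        · simp only [hw', dif_pos h, hch]
        · simp only [hz', dif_pos h, hch]
      have houtside : ∀ j : Fin m, j ∉ Finset.univ.map e → w' j = 0 := by
        intro j hj
        have hne : ¬ ∃ i, e i = j := by
          rintro ⟨i, hi⟩
          exact hj (Finset.mem_map.mpr ⟨i, Finset.mem_univ _, hi⟩)
        simp only [hw', dif_neg hne]
      have hWsum : ∑ j : Fin m, w' j = 1 := by
        have h1 : ∑ j : Fin m, w' j = ∑ j ∈ Finset.univ.map e, w' j := by
          refine (Finset.sum_subset (Finset.subset_univ _) ?_).symm
          intro j _ hj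
          exact houtside j hj
        rw [h1, Finset.sum_map]
        rw [← hw1]
        exact Finset.sum_congr rfl fun i _ => (hkey i).1
      have hEsum : ∑ j : Fin m, w' j • z' j = x := by
        have h1 : ∑ j : Fin m, w' j • z' j = ∑ j ∈ Finset.univ.map e, w' j • z' j := by
          refine (Finset.sum_subset (Finset.subset_univ _) ?_).symm
          intro j _ hj
          rw [houtside j hj, zero_smul]
        rw [h1, Finset.sum_map, ← hwz]
        exact Finset.sum_congr rfl fun i _ => by rw [(hkey i).1, (hkey i).2]
      refine ⟨(w', z'), ⟨⟨?_, hWsum⟩, ?_⟩, hEsum⟩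
      · intro j
        by_cases h : ∃ i, e i = j
        · simp only [hw', dif_pos h]; exact (hw _).le
        · simp only [hw', dif_neg h]; exact le_rfl
      · intro j _
        by_cases h : ∃ i, e i = j
        · simp only [hz', dif_pos h]
          exact hzs ⟨h.choose, rfl⟩
        · simp only [hz', dif_neg h]
          exact hx₀
    · rintro x ⟨⟨w, z⟩, ⟨hwmem, hzmem⟩, rfl⟩
      have h01 : (0 : ℝ) < ∑ j : Fin m, w j := by rw [hwmem.2]; norm_num
      have := Finset.centerMass_mem_convexHull (Finset.univ) (fun j _ => hwmem.1 j) h01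
        (fun j _ => hzmem j (Set.mem_univ j))
      rwa [Finset.centerMass_eq_of_sum_1 _ _ hwmem.2] at this
  rw [himg]
  exact hcomp.image hcont

/-- If `f : ℝⁿ → (-∞,+∞]` is bounded from below, superlinear at infinity
(`f ξ / |ξ| → +∞`), and lower semicontinuous, then its level convex envelope `f^lc`
is lower semicontinuous. -/
theorem lowerSemicontinuous_lcEnv {n : ℕ} (f : EuclideanSpace ℝ (Fin n) → EReal)
    (hfbot : ∀ ξ, f ξ ≠ ⊥)
    (hbdd : ∃ C : ℝ, ∀ ξ, (C : EReal) ≤ f ξ)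
    (hsuperlin : ∀ M : ℝ, ∃ R : ℝ, ∀ ξ : EuclideanSpace ℝ (Fin n),
      R ≤ ‖ξ‖ → ((M * ‖ξ‖ : ℝ) : EReal) ≤ f ξ)
    (hlsc : LowerSemicontinuous f) :
    LowerSemicontinuous (lcEnv f) := by
  classical
  set K : EReal → Set (EuclideanSpace ℝ (Fin n)) :=
    fun c => convexHull ℝ {x | f x ≤ c} with hK
  have Kmono : ∀ {c d : EReal}, c ≤ d → K c ⊆ K d :=
    fun hcd => convexHull_mono fun x hx => le_trans hx hcd
  set h : EuclideanSpace ℝ (Fin n) → EReal := fun ξ => sInf {c | ξ ∈ K c} with hh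
  have hmem : ∀ ξ c, ξ ∈ K c → h ξ ≤ c := fun ξ c hc => sInf_le hc
  have hlt : ∀ ξ d, h ξ < d → ξ ∈ K d := by
    intro ξ d hd
    obtain ⟨c, hc, hcd⟩ := sInf_lt_iff.1 hd
    exact Kmono hcd.le hc
  have hlef : h ≤ f := fun ξ =>
    hmem ξ (f ξ) (subset_convexHull ℝ _ (show f ξ ≤ f ξ from le_rfl))
  have hLC : LevelConvex h := by
    intro ξ η t ht
    by_contra hcon
    push_neg at hcon
    obtain ⟨y, hy1, hy2⟩ := EReal.exists_between_coe_real hcon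
    have hξ : ξ ∈ K y := hlt _ _ (lt_of_le_of_lt (le_max_left _ _) hy1)
    have hη : η ∈ K y := hlt _ _ (lt_of_le_of_lt (le_max_right _ _) hy1)
    have hcomb : t • ξ + (1 - t) • η ∈ K y :=
      (convex_convexHull ℝ _) hξ hη ht.1 (by linarith [ht.2]) (by ring)
    exact absurd (hmem _ _ hcomb) (not_le.2 hy2)
  have henv : lcEnv f = h := by
    funext ξ
    apply le_antisymm
    · refine iSup_le fun g => iSup_le fun hg => ?_
      refine le_sInf fun c hc => ?_
      have hsub : K c ⊆ {x | g x ≤ c} := by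
        apply convexHull_min
        · exact fun x hx => le_trans (hg.2 x) hx
        · intro x hx y hy a b ha hb hab
          have hmax := hg.1 x y a ⟨ha, by linarith⟩
          have hb' : (1 : ℝ) - a = b := by linarith
          rw [hb'] at hmax
          exact le_trans hmax (max_le hx hy)
      exact hsub hc
    · exact le_iSup_of_le h (le_iSup_of_le ⟨hLC, hlef⟩ le_rfl)
  rw [henv, lowerSemicontinuous_iff_isClosed_preimage]
  intro c
  have hKclosed : ∀ d : ℝ, IsClosed (K (d : EReal)) := by
    intro d
    have hEclosed : IsClosed {x | f x ≤ (d : EReal)} := hlsc.isClosed_preimage (d : EReal)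
    obtain ⟨R, hR⟩ := hsuperlin 1
    have hEbdd : {x | f x ≤ (d : EReal)} ⊆ Metric.closedBall 0 (max R d) := by
      intro x hx
      rw [mem_closedBall_zero_iff]
      by_contra hgt
      push_neg at hgt
      have hRx : R ≤ ‖x‖ := le_of_lt (lt_of_le_of_lt (le_max_left _ _) hgt)
      have h1 := hR x hRx
      rw [one_mul] at h1
      have h2 : (‖x‖ : EReal) ≤ (d : EReal) := le_trans h1 hx
      have h3 : ‖x‖ ≤ d := EReal.coe_le_coe_iff.1 h2
      exact absurd h3 (not_le.2 (lt_of_le_of_lt (le_max_right _ _) hgt))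
    have hEcompact : IsCompact {x | f x ≤ (d : EReal)} :=
      Metric.isCompact_iff_isClosed_bounded.2
        ⟨hEclosed, Metric.isBounded_closedBall.subset hEbdd⟩
    exact (isCompact_convexHull_of_isCompact hEcompact).isClosed
  have hset : h ⁻¹' Iic c = ⋂ (d : ℝ) (_ : c < (d : EReal)), K (d : EReal) := by
    ext ξ
    simp only [mem_preimage, mem_Iic, mem_iInter]
    constructor
    · intro hξ d hd
      exact hlt _ _ (lt_of_le_of_lt hξ hd)
    · intro hd
      by_contra hgt
      push_neg at hgt
      obtain ⟨y, hy1, hy2⟩ := EReal.exists_between_coe_real hgt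
      exact absurd (hmem _ _ (hd y hy1)) (not_le.2 hy2)
  rw [hset]
  exact isClosed_iInter fun d => isClosed_iInter fun _ => hKclosed d
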